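/- The GRL density integrates to one: for all real λ ≥ 2 and α > 0, the improper integral of f over (0, ∞) equals 1, i.e. ∫_{0}^{∞} (α/(λ(λ−1))) · t^(α−1) · (λ + t^α/λ − 2) · exp(−t^α/λ) dt = 1. -/

import Mathlib

open Real MeasureTheory

/-- The GRL density integrates to one. -/
theorem grl_density_integrates_to_one (lam α : ℝ) (hlam : 2 ≤ lam) (hα : 0 < α) :
    ∫ t in Set.Ioi (0 : ℝ),
      (α / (lam * (lam - 1))) * t ^ (α - 1) * (lam + t ^ α / lam - 2) *
        Real.exp (-(t ^ α / lam)) = 1 := by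
  have hlam0 : (0:ℝ) < lam := by linarith
  have hlam1 : (0:ℝ) < lam - 1 := by linarith
  have hc : (0:ℝ) < lam * (lam - 1) := mul_pos hlam0 hlam1
  set F : ℝ → ℝ := fun t => -((1 + t ^ α / (lam * (lam - 1))) * Real.exp (-(t ^ α / lam)))
    with hF
  have hcont : ContinuousWithinAt F (Set.Ici 0) 0 := by
    apply ContinuousWithinAt.neg
    apply ContinuousWithinAt.mul
    · exact (continuousWithinAt_const.add
        (((Real.continuousAt_rpow_const 0 α (Or.inr hα.le)).continuousWithinAt).div_const _))
    · exact (Real.continuous_exp.continuousAt.comp_continuousWithinAt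
        (((Real.continuousAt_rpow_const 0 α (Or.inr hα.le)).continuousWithinAt).div_const _).neg)
  have hderiv : ∀ x ∈ Set.Ioi (0:ℝ), HasDerivAt F
      ((α / (lam * (lam - 1))) * x ^ (α - 1) * (lam + x ^ α / lam - 2) *
        Real.exp (-(x ^ α / lam))) x := by
    intro x hx
    have hx0 : x ≠ 0 := ne_of_gt hx
    have hg : HasDerivAt (fun t : ℝ => t ^ α) (α * x ^ (α - 1)) x :=
      Real.hasDerivAt_rpow_const (Or.inl hx0)
    have h1 : HasDerivAt (fun t : ℝ => 1 + t ^ α / (lam * (lam - 1)))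
        (α * x ^ (α - 1) / (lam * (lam - 1))) x := (hg.div_const _).const_add 1
    have h2 : HasDerivAt (fun t : ℝ => Real.exp (-(t ^ α / lam)))
        (Real.exp (-(x ^ α / lam)) * (-(α * x ^ (α - 1) / lam))) x :=
      ((hg.div_const lam).neg).exp
    have := (h1.mul h2).neg
    refine this.congr_deriv ?_
    field_simp [hlam0.ne', hlam1.ne']
    ring
  have hnonneg : ∀ x ∈ Set.Ioi (0:ℝ),
      0 ≤ (α / (lam * (lam - 1))) * x ^ (α - 1) * (lam + x ^ α / lam - 2) *
        Real.exp (-(x ^ α / lam)) := by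
    intro x hx
    have hx0 : 0 < x := hx
    have h1 : 0 ≤ α / (lam * (lam - 1)) := le_of_lt (div_pos hα hc)
    have h2 : 0 ≤ x ^ (α - 1) := Real.rpow_nonneg hx0.le _
    have h3 : 0 ≤ x ^ α / lam := div_nonneg (Real.rpow_nonneg hx0.le _) hlam0.le
    have h4 : 0 ≤ lam + x ^ α / lam - 2 := by linarith
    positivity
  have htend : Filter.Tendsto F Filter.atTop (nhds 0) := by
    have hv : Filter.Tendsto (fun t : ℝ => t ^ α / lam) Filter.atTop Filter.atTop :=
      (tendsto_rpow_atTop hα).atTop_div_const hlam0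
    -- instead: F t = -(exp (-v) + (lam/(lam*(lam-1))) * (v * exp (-v))) with v = t^α/lam
    have hveto : Filter.Tendsto (fun v : ℝ => v * Real.exp (-v)) Filter.atTop (nhds 0) := by
      simpa using Real.tendsto_pow_mul_exp_neg_atTop_nhds_zero 1
    have hexp : Filter.Tendsto (fun v : ℝ => Real.exp (-v)) Filter.atTop (nhds 0) :=
      Real.tendsto_exp_neg_atTop_nhds_zero
    have hcomb : Filter.Tendsto
        (fun v : ℝ => -(Real.exp (-v) + ((lam - 1)⁻¹) * (v * Real.exp (-v))))
        Filter.atTop (nhds 0) := by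
      have := (hexp.add ((hveto.const_mul ((lam - 1)⁻¹)))).neg
      simpa using this
    have := hcomb.comp hv
    refine this.congr fun t => ?_
    have hne : lam ≠ 0 := hlam0.ne'
    have hne1 : lam - 1 ≠ 0 := hlam1.ne'
    simp only [Function.comp, hF]
    field_simp
  have key := integral_Ioi_of_hasDerivAt_of_nonneg hcont hderiv hnonneg htend
  rw [key, hF]
  simp [Real.zero_rpow (ne_of_gt hα)]
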